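/- Special case $\alpha = 1$: Under the hypotheses of the main theorem with $\alpha = 1$, $\epsilon = 1$ and $\varphi_n = n^{1 - 1/k}$, the series $\sum a_n \lambda_n$ is summable $|C,1|_k$, i.e. $\sum_{n=1}^{\infty} \frac{1}{n} |t_n|^k < \infty$, where $t_n = \frac{1}{n+1}\sum_{v=1}^{n} v a_v \lambda_v$. -/

import Mathlib

open Finset

lemma aux_two_rpow {u v k : ℝ} (hu : 0 ≤ u) (hv : 0 ≤ v) (hk : 1 ≤ k) :
    (u + v) ^ k ≤ 2 ^ k * (u ^ k + v ^ k) := by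
  have h1 : u + v ≤ 2 * max u v := by
    rcases le_total u v with h | h
    · rw [max_eq_right h]; linarith
    · rw [max_eq_left h]; linarith
  have hm : (0:ℝ) ≤ max u v := le_max_of_le_left hu
  calc (u + v) ^ k ≤ (2 * max u v) ^ k :=
        Real.rpow_le_rpow (by linarith) h1 (by linarith)
    _ = 2 ^ k * (max u v) ^ k := Real.mul_rpow (by norm_num) hm
    _ ≤ 2 ^ k * (u ^ k + v ^ k) := by
        have h2 : (max u v) ^ k ≤ u ^ k + v ^ k := by
          rcases le_total u v with h | h
          · rw [max_eq_right h]
            have := Real.rpow_nonneg hu k; linarith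
          · rw [max_eq_left h]
            have := Real.rpow_nonneg hv k; linarith
        have h3 : (0:ℝ) ≤ 2 ^ k := Real.rpow_nonneg (by norm_num) k
        nlinarith [Real.rpow_nonneg hm k]

lemma aux_jensen (s : Finset ℕ) (μ x : ℕ → ℝ) (hμ : ∀ i ∈ s, 0 ≤ μ i)
    (hx : ∀ i ∈ s, 0 ≤ x i) {k : ℝ} (hk : 1 ≤ k) :
    (∑ i ∈ s, μ i * x i) ^ k ≤ (∑ i ∈ s, μ i) ^ (k - 1) * ∑ i ∈ s, μ i * x i ^ k := by
  set M := ∑ i ∈ s, μ i with hM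
  have hM0 : 0 ≤ M := Finset.sum_nonneg hμ
  rcases eq_or_lt_of_le hM0 with h0 | hpos
  · have hz : ∀ i ∈ s, μ i = 0 := by
      intro i hi
      exact (Finset.sum_eq_zero_iff_of_nonneg hμ).1 h0.symm i hi
    have h1 : ∑ i ∈ s, μ i * x i = 0 := Finset.sum_eq_zero fun i hi => by rw [hz i hi, zero_mul]
    have h2 : ∑ i ∈ s, μ i * x i ^ k = 0 := Finset.sum_eq_zero fun i hi => by rw [hz i hi, zero_mul]
    rw [h1, h2, mul_zero, Real.zero_rpow (by linarith)]
  · have hw : ∀ i ∈ s, 0 ≤ μ i / M := fun i hi => div_nonneg (hμ i hi) hM0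
    have hw1 : ∑ i ∈ s, μ i / M = 1 := by
      rw [← Finset.sum_div, ← hM, div_self (ne_of_gt hpos)]
    have key := Real.rpow_arith_mean_le_arith_mean_rpow s (fun i => μ i / M) x hw hw1 hx hk
    have e1 : ∑ i ∈ s, μ i / M * x i = (∑ i ∈ s, μ i * x i) / M := by
      rw [Finset.sum_div]; exact Finset.sum_congr rfl fun i _ => by ring
    have e2 : ∑ i ∈ s, μ i / M * x i ^ k = (∑ i ∈ s, μ i * x i ^ k) / M := by
      rw [Finset.sum_div]; exact Finset.sum_congr rfl fun i _ => by ring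
    rw [e1, e2] at key
    have hSnn : 0 ≤ ∑ i ∈ s, μ i * x i :=
      Finset.sum_nonneg fun i hi => mul_nonneg (hμ i hi) (hx i hi)
    have e3 : (∑ i ∈ s, μ i * x i) ^ k = ((∑ i ∈ s, μ i * x i) / M) ^ k * M ^ k := by
      rw [← Real.mul_rpow (div_nonneg hSnn hM0) hM0, div_mul_cancel₀]
      exact ne_of_gt hpos
    rw [e3]
    have hMk : (0:ℝ) ≤ M ^ k := Real.rpow_nonneg hM0 k
    calc ((∑ i ∈ s, μ i * x i) / M) ^ k * M ^ k
        ≤ (∑ i ∈ s, μ i * x i ^ k) / M * M ^ k := mul_le_mul_of_nonneg_right key hMk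
      _ = M ^ (k - 1) * ∑ i ∈ s, μ i * x i ^ k := by
          rw [Real.rpow_sub hpos, Real.rpow_one]; field_simp

lemma aux_abel (c b : ℕ → ℝ) (m : ℕ) :
    ∑ n ∈ Icc 1 m, c n * b n =
      (∑ n ∈ Icc 1 m, (c n - c (n + 1)) * ∑ j ∈ Icc 1 n, b j) +
        c (m + 1) * ∑ j ∈ Icc 1 m, b j := by
  induction m with
  | zero => simp
  | succ m ih =>
      rw [Finset.sum_Icc_succ_top (by omega : 1 ≤ m + 1),
        Finset.sum_Icc_succ_top (by omega : 1 ≤ m + 1) (fun n => (c n - c (n+1)) * ∑ j ∈ Icc 1 n, b j),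
        Finset.sum_Icc_succ_top (by omega : 1 ≤ m + 1) b, ih]
      ring

lemma aux_swap (g : ℕ → ℕ → ℝ) (m : ℕ) :
    ∑ n ∈ Icc 1 m, ∑ v ∈ Icc 1 n, g v n = ∑ v ∈ Icc 1 m, ∑ n ∈ Icc v m, g v n := by
  induction m with
  | zero => simp
  | succ m ih =>
      rw [Finset.sum_Icc_succ_top (by omega : 1 ≤ m + 1), ih,
        Finset.sum_Icc_succ_top (by omega : 1 ≤ m + 1) (fun v => ∑ n ∈ Icc v (m+1), g v n)]
      have h1 : ∀ v ∈ Icc 1 m, ∑ n ∈ Icc v (m+1), g v n = (∑ n ∈ Icc v m, g v n) + g v (m+1) := by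
        intro v hv
        exact Finset.sum_Icc_succ_top (by simp at hv; omega) _
      rw [Finset.sum_congr rfl h1, Finset.sum_add_distrib]
      have h2 : Icc (m+1) (m+1) = {m+1} := Icc_self _
      rw [h2, Finset.sum_singleton, Finset.sum_Icc_succ_top (by omega : 1 ≤ m + 1) (fun v => g v (m+1))]
      ring

lemma aux_invsq (v : ℕ) (hv : 1 ≤ v) (m : ℕ) :
    ∑ n ∈ Icc v m, ((n:ℝ))⁻¹ * ((n:ℝ))⁻¹ ≤ 2 / v := by
  have hv1 : (1:ℝ) ≤ v := by exact_mod_cast hv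
  have hvpos : (0:ℝ) < v := by linarith
  have key : ∀ m : ℕ, ∑ n ∈ Icc v m, ((n:ℝ))⁻¹ * ((n:ℝ))⁻¹ ≤ 2 / v - 1 / (max v m : ℕ) := by
    intro m
    induction m with
    | zero =>
        rw [Finset.Icc_eq_empty (by omega), Finset.sum_empty]
        have hh : max v 0 = v := by omega
        rw [hh]
        have : 2/(v:ℝ) - 1/v = 1/v := by ring
        rw [this]; positivity
    | succ m ih =>
        rcases le_or_gt v (m+1) with h | h
        · rcases eq_or_lt_of_le h with he | hlt
          · rw [← he, Finset.Icc_self, Finset.sum_singleton]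
            have hh : max v v = v := by omega
            rw [hh]
            have h2 : 2/(v:ℝ) - 1/v = 1/v := by ring
            rw [h2]
            have h3 : (v:ℝ)⁻¹ ≤ 1 := by
              rw [inv_eq_one_div, div_le_one hvpos]; exact hv1
            have h4 : (0:ℝ) ≤ (v:ℝ)⁻¹ := by positivity
            rw [inv_eq_one_div] at *
            nlinarith
          · have hvm : v ≤ m := by omega
            rw [Finset.sum_Icc_succ_top h]
            have hmax1 : max v m = m := by omega
            have hmax2 : max v (m+1) = m+1 := by omega
            rw [hmax1] at ih
            rw [hmax2]
            have hm1 : (1:ℝ) ≤ m := by exact_mod_cast hvm.trans' hv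
            have h0 : (0:ℝ) < m := by linarith
            have key2 : ((m:ℝ)+1)⁻¹ * ((m:ℝ)+1)⁻¹ ≤ 1/(m:ℝ) - 1/((m:ℝ)+1) := by
              have hsub : 1/(m:ℝ) - 1/((m:ℝ)+1) = 1/((m:ℝ)*((m:ℝ)+1)) := by
                field_simp
                ring
              rw [hsub, inv_eq_one_div, div_mul_div_comm, one_mul,
                div_le_div_iff₀ (by positivity) (by positivity)]
              nlinarith
            push_cast
            push_cast at ih
            linarith
        · rw [Finset.Icc_eq_empty (by omega), Finset.sum_empty]
          have hh : max v (m+1) = v := by omega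
          rw [hh]
          have : 2/(v:ℝ) - 1/v = 1/v := by ring
          rw [this]; positivity
  calc ∑ n ∈ Icc v m, ((n:ℝ))⁻¹ * ((n:ℝ))⁻¹ ≤ 2 / v - 1 / (max v m : ℕ) := key m
    _ ≤ 2 / v := by
        have : (0:ℝ) ≤ 1 / (max v m : ℕ) := by positivity
        linarith


def AlmostIncreasing (b : ℕ → ℝ) : Prop :=
  ∃ (c : ℕ → ℝ) (A B : ℝ), 0 < A ∧ 0 < B ∧ (∀ n, 0 < c n) ∧ StrictMono c ∧
    ∀ n, A * c n ≤ b n ∧ b n ≤ B * c n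

def DeltaQuasiMonotone (A δ : ℕ → ℝ) : Prop :=
  Filter.Tendsto A Filter.atTop (nhds 0) ∧ (∀ᶠ n in Filter.atTop, 0 < A n) ∧
    ∀ n, A n - A (n + 1) ≥ -δ n

set_option maxHeartbeats 1000000 in
/-- Special case `α = 1`, `ε = 1`, `φ_n = n^{1-1/k}`: under the hypotheses of the main
theorem, `∑ a_n λ_n` is summable `|C,1|_k`, i.e. `∑ (1/n) |t_n|^k < ∞` where
`t_n = (n+1)⁻¹ ∑_{v=1}^n v a_v λ_v`. -/
theorem summable_C1k (X A δ lam a : ℕ → ℝ) (k : ℝ)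
    (hX : AlmostIncreasing X)
    (hlamX : ∃ C : ℝ, ∀ n, |lam n| * X n ≤ C)
    (hδpos : ∀ n, 0 < δ n) (hqm : DeltaQuasiMonotone A δ)
    (hAX : Summable (fun n : ℕ => (n : ℝ) * A n * X n))
    (hΔ : ∀ n, |lam n - lam (n + 1)| ≤ |A n|)
    (hk : 1 ≤ k)
    (ht' : ∃ C : ℝ, ∀ m : ℕ, 1 ≤ m →
      (∑ n ∈ Finset.Icc 1 m, (1 / (n : ℝ)) *
        |((n : ℝ) + 1)⁻¹ * ∑ v ∈ Finset.Icc 1 n, (v : ℝ) * a v| ^ k) ≤ C * X m) :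
    Summable (fun n : ℕ => (1 / (n : ℝ)) *
      |((n : ℝ) + 1)⁻¹ * ∑ v ∈ Finset.Icc 1 n, (v : ℝ) * a v * lam v| ^ k) := by
  obtain ⟨-, hAev, -⟩ := hqm
  obtain ⟨c, Aℓ, Bc, hAℓ, hBc, hcpos, hcmono, hbound⟩ := hX
  obtain ⟨C₀, hC₀⟩ := hlamX
  obtain ⟨N, hN⟩ := Filter.eventually_atTop.mp hAev
  obtain ⟨C₁, hC₁⟩ := ht'
  have hk0 : (0:ℝ) < k := lt_of_lt_of_le one_pos hk
  have hk1 : (0:ℝ) ≤ k - 1 := by linarith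
  have hXpos : ∀ n, 0 < X n := fun n => lt_of_lt_of_le (mul_pos hAℓ (hcpos n)) (hbound n).1
  set K := Bc / Aℓ with hKdef
  have hK0 : 0 < K := div_pos hBc hAℓ
  have hXcomp : ∀ v m : ℕ, v ≤ m → X v ≤ K * X m := by
    intro v m hvm
    have h1 : X v ≤ Bc * c v := (hbound v).2
    have h2 : c v ≤ c m := hcmono.monotone hvm
    have h3 : Aℓ * c m ≤ X m := (hbound m).1
    have h4 : K * (Aℓ * c m) ≤ K * X m := by nlinarith
    calc X v ≤ Bc * c v := h1
      _ ≤ Bc * c m := by nlinarith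
      _ = K * (Aℓ * c m) := by rw [hKdef]; field_simp
      _ ≤ K * X m := h4
  set x0 := Aℓ * c 0 with hx0def
  have hx0 : 0 < x0 := mul_pos hAℓ (hcpos 0)
  have hx0le : ∀ n, x0 ≤ X n := by
    intro n
    have h2 : c 0 ≤ c n := hcmono.monotone (Nat.zero_le n)
    calc x0 = Aℓ * c 0 := rfl
      _ ≤ Aℓ * c n := by nlinarith
      _ ≤ X n := (hbound n).1
  set L := C₀ / x0 with hLdef
  have hlamL : ∀ n, |lam n| ≤ L := by
    intro n
    rw [hLdef, le_div_iff₀ hx0]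
    calc |lam n| * x0 ≤ |lam n| * X n := by nlinarith [abs_nonneg (lam n), hx0le n]
      _ ≤ C₀ := hC₀ n
  have hL0 : 0 ≤ L := le_trans (abs_nonneg (lam 0)) (hlamL 0)
  set P : ℕ → ℝ := fun n => (n:ℝ) * |A n| * X n with hPdef
  have hP0 : ∀ n, 0 ≤ P n := fun n =>
    mul_nonneg (mul_nonneg (Nat.cast_nonneg n) (abs_nonneg _)) (hXpos n).le
  have hPsum : Summable P := by
    have h1 : Summable (fun n : ℕ => (((n + N : ℕ)) : ℝ) * A (n + N) * X (n + N)) :=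
      (summable_nat_add_iff N).mpr hAX
    have h2 : Summable (fun n => P (n + N)) := by
      refine h1.congr fun n => ?_
      have hpos := hN (n + N) (Nat.le_add_left N n)
      simp [hPdef, abs_of_pos hpos]
    exact (summable_nat_add_iff N).mp h2
  set M₁ := ∑' n, P n with hM₁def
  have hM₁ : ∀ s : Finset ℕ, ∑ n ∈ s, P n ≤ M₁ :=
    fun s => Summable.sum_le_tsum s (fun i _ => hP0 i) hPsum
  have hM₁0 : 0 ≤ M₁ := tsum_nonneg hP0
  set M₂ := M₁ / x0 with hM₂def
  have hM₂ : ∀ m : ℕ, ∑ v ∈ Icc 1 m, (v:ℝ) * |A v| ≤ M₂ := by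
    intro m
    rw [hM₂def, le_div_iff₀ hx0, Finset.sum_mul]
    calc ∑ v ∈ Icc 1 m, (v:ℝ) * |A v| * x0 ≤ ∑ v ∈ Icc 1 m, P v := by
          apply Finset.sum_le_sum
          intro v _
          have h1 := hx0le v
          have h2 : (0:ℝ) ≤ (v:ℝ) * |A v| := by positivity
          calc (v:ℝ) * |A v| * x0 ≤ (v:ℝ) * |A v| * X v := by nlinarith
            _ = P v := rfl
      _ ≤ M₁ := hM₁ _
  have hC₁0 : 0 ≤ C₁ := by
    have h1 := hC₁ 1 le_rfl
    have h2 : (0:ℝ) ≤ ∑ n ∈ Finset.Icc (1:ℕ) 1, (1 / (n : ℝ)) *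
        |((n : ℝ) + 1)⁻¹ * ∑ v ∈ Finset.Icc 1 n, (v : ℝ) * a v| ^ k := by
      apply Finset.sum_nonneg
      intro i _
      have : (0:ℝ) ≤ |((i : ℝ) + 1)⁻¹ * ∑ v ∈ Finset.Icc (1:ℕ) i, (v : ℝ) * a v| ^ k :=
        Real.rpow_nonneg (abs_nonneg _) k
      positivity
    have h3 : (0:ℝ) * X 1 ≤ C₁ * X 1 := by linarith
    exact le_of_mul_le_mul_right (by linarith) (hXpos 1)
  -- local abbreviations
  set S : ℕ → ℝ := fun v : ℕ => ∑ r ∈ Icc 1 v, (r:ℝ) * a r with hSdef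
  set t' : ℕ → ℝ := fun v : ℕ => ((v:ℝ) + 1)⁻¹ * S v with ht'def
  set b' : ℕ → ℝ := fun v : ℕ => (1 / (v:ℝ)) * |t' v| ^ k with hb'def
  have hb'0 : ∀ v, 0 ≤ b' v := by
    intro v
    have : (0:ℝ) ≤ |t' v| ^ k := Real.rpow_nonneg (abs_nonneg _) k
    have h2 : (0:ℝ) ≤ 1 / (v:ℝ) := by positivity
    simp only [hb'def]
    positivity
  have hC₁X : ∀ m : ℕ, ∑ n ∈ Icc 1 m, b' n ≤ C₁ * X m := by
    intro m
    rcases Nat.eq_zero_or_pos m with h | h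
    · subst h
      rw [Finset.Icc_eq_empty (by omega), Finset.sum_empty]
      exact mul_nonneg hC₁0 (hXpos 0).le
    · exact hC₁ m h
  have hterm : ∀ v : ℕ, 1 ≤ v → |t' v| ^ k ≤ C₁ * v * X v := by
    intro v hv
    have h1 : b' v ≤ ∑ n ∈ Icc 1 v, b' n :=
      Finset.single_le_sum (fun i _ => hb'0 i) (by simp [hv])
    have h2 : b' v ≤ C₁ * X v := h1.trans (hC₁X v)
    have hv0 : (0:ℝ) < (v:ℝ) := by exact_mod_cast hv
    have h3 : |t' v| ^ k = (v:ℝ) * b' v := by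
      simp only [hb'def]
      field_simp
    rw [h3]
    calc (v:ℝ) * b' v ≤ (v:ℝ) * (C₁ * X v) := by nlinarith
      _ = C₁ * v * X v := by ring
  set T : ℕ → ℝ := fun n : ℕ => ∑ v ∈ Icc 1 n, (v:ℝ) * a v * lam v with hTdef
  have hid : ∀ n : ℕ, T n = (∑ v ∈ Icc 1 n, (lam v - lam (v+1)) * S v) + lam (n+1) * S n := by
    intro n
    induction n with
    | zero => simp [hTdef, hSdef]
    | succ n ih =>
        have e1 : T (n+1) = T n + ((n+1:ℕ):ℝ) * a (n+1) * lam (n+1) :=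
          Finset.sum_Icc_succ_top (by omega) _
        have e2 : S (n+1) = S n + ((n+1:ℕ):ℝ) * a (n+1) :=
          Finset.sum_Icc_succ_top (by omega) _
        rw [e1, ih, Finset.sum_Icc_succ_top (by omega : 1 ≤ n+1)
          (fun v => (lam v - lam (v+1)) * S v), e2]
        ring
  have hSt : ∀ v : ℕ, |S v| = ((v:ℝ) + 1) * |t' v| := by
    intro v
    have hv1 : (0:ℝ) < (v:ℝ) + 1 := by positivity
    have hse : S v = ((v:ℝ) + 1) * t' v := by
      simp only [ht'def]
      field_simp
    rw [hse, abs_mul, abs_of_pos hv1]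
  set U : ℕ → ℝ := fun n : ℕ =>
    ((n:ℝ) + 1)⁻¹ * ∑ v ∈ Icc 1 n, (|A v| * ((v:ℝ) + 1)) * |t' v| with hUdef
  set V : ℕ → ℝ := fun n : ℕ => |lam (n+1)| * |t' n| with hVdef
  have hsumnn : ∀ n : ℕ, 0 ≤ ∑ v ∈ Icc 1 n, (|A v| * ((v:ℝ) + 1)) * |t' v| := fun n =>
    Finset.sum_nonneg fun v _ =>
      mul_nonneg (mul_nonneg (abs_nonneg _) (by positivity)) (abs_nonneg _)
  have hU0 : ∀ n, 0 ≤ U n := by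
    intro n
    simp only [hUdef]
    exact mul_nonneg (by positivity) (hsumnn n)
  have hV0 : ∀ n, 0 ≤ V n := fun n => mul_nonneg (abs_nonneg _) (abs_nonneg _)
  have habs : ∀ n : ℕ, |((n:ℝ) + 1)⁻¹ * T n| ≤ U n + V n := by
    intro n
    have hn1 : (0:ℝ) < (n:ℝ) + 1 := by positivity
    have h1 : |T n| ≤ (∑ v ∈ Icc 1 n, (|A v| * ((v:ℝ)+1)) * |t' v|)
        + |lam (n+1)| * (((n:ℝ)+1) * |t' n|) := by
      rw [hid n]
      have hterm2 : ∀ v ∈ Icc 1 n, |(lam v - lam (v+1)) * S v| ≤ (|A v| * ((v:ℝ)+1)) * |t' v| := by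
        intro v _
        rw [abs_mul, hSt v]
        have h3 := hΔ v
        have h4 : (0:ℝ) ≤ ((v:ℝ)+1) * |t' v| := mul_nonneg (by positivity) (abs_nonneg _)
        calc |lam v - lam (v+1)| * (((v:ℝ)+1) * |t' v|)
            ≤ |A v| * (((v:ℝ)+1) * |t' v|) := mul_le_mul_of_nonneg_right h3 h4
          _ = (|A v| * ((v:ℝ)+1)) * |t' v| := by ring
      have h5 := Finset.sum_le_sum hterm2
      have h6 : |lam (n+1) * S n| = |lam (n+1)| * (((n:ℝ)+1) * |t' n|) := by
        rw [abs_mul, hSt n]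
      have h7 := Finset.abs_sum_le_sum_abs (fun v => (lam v - lam (v+1)) * S v) (Icc 1 n)
      calc |(∑ v ∈ Icc 1 n, (lam v - lam (v+1)) * S v) + lam (n+1) * S n|
          ≤ |∑ v ∈ Icc 1 n, (lam v - lam (v+1)) * S v| + |lam (n+1) * S n| := abs_add_le _ _
        _ ≤ (∑ v ∈ Icc 1 n, (|A v| * ((v:ℝ)+1)) * |t' v|)
            + |lam (n+1)| * (((n:ℝ)+1) * |t' n|) := by rw [← h6]; linarith
    have h2 : |((n:ℝ)+1)⁻¹ * T n| = ((n:ℝ)+1)⁻¹ * |T n| := by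
      rw [abs_mul, abs_of_pos (inv_pos.mpr hn1)]
    rw [h2]
    have h7 : ((n:ℝ)+1)⁻¹ * |T n| ≤ ((n:ℝ)+1)⁻¹ * ((∑ v ∈ Icc 1 n, (|A v| * ((v:ℝ)+1)) * |t' v|)
        + |lam (n+1)| * (((n:ℝ)+1) * |t' n|)) := mul_le_mul_of_nonneg_left h1 (by positivity)
    have hne : ((n:ℝ)+1) ≠ 0 := ne_of_gt hn1
    have h8 : ((n:ℝ)+1)⁻¹ * ((∑ v ∈ Icc 1 n, (|A v| * ((v:ℝ)+1)) * |t' v|)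
        + |lam (n+1)| * (((n:ℝ)+1) * |t' n|)) = U n + V n := by
      simp only [hUdef, hVdef, mul_add]
      congr 1
      field_simp
    linarith
  have hpt : ∀ n : ℕ, (1 / (n:ℝ)) * |((n:ℝ) + 1)⁻¹ * T n| ^ k ≤
      2 ^ k * ((1 / (n:ℝ)) * U n ^ k) + 2 ^ k * ((1 / (n:ℝ)) * V n ^ k) := by
    intro n
    have hn0 : (0:ℝ) ≤ 1 / (n:ℝ) := by positivity
    have h1 : |((n:ℝ)+1)⁻¹ * T n| ^ k ≤ (U n + V n) ^ k :=
      Real.rpow_le_rpow (abs_nonneg _) (habs n) (le_of_lt hk0)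
    have h2 : (U n + V n) ^ k ≤ 2 ^ k * (U n ^ k + V n ^ k) := aux_two_rpow (hU0 n) (hV0 n) hk
    have h3 : (1/(n:ℝ)) * |((n:ℝ)+1)⁻¹ * T n| ^ k ≤ (1/(n:ℝ)) * (2^k * (U n ^ k + V n ^ k)) :=
      mul_le_mul_of_nonneg_left (h1.trans h2) hn0
    calc (1/(n:ℝ)) * |((n:ℝ)+1)⁻¹ * T n| ^ k ≤ (1/(n:ℝ)) * (2^k * (U n ^ k + V n ^ k)) := h3
      _ = 2^k * ((1/(n:ℝ)) * U n ^ k) + 2^k * ((1/(n:ℝ)) * V n ^ k) := by ring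
  have hpow : ∀ y : ℕ, |lam y| ^ k ≤ L ^ (k-1) * |lam y| := by
    intro y
    rcases eq_or_lt_of_le (abs_nonneg (lam y)) with h | h
    · rw [← h, Real.zero_rpow (ne_of_gt hk0), mul_zero]
    · have e := Real.rpow_add h (k-1) 1
      rw [Real.rpow_one] at e
      have h2 : k - 1 + 1 = k := by ring
      rw [h2] at e
      rw [e]
      exact mul_le_mul_of_nonneg_right
        (Real.rpow_le_rpow (abs_nonneg _) (hlamL y) hk1) (abs_nonneg _)
  have hVsum : ∀ m : ℕ, ∑ n ∈ Icc 1 m, (1/(n:ℝ)) * V n ^ k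
      ≤ L ^ (k-1) * (C₁ * K * M₁ + C₁ * K * C₀) := by
    intro m
    have step1 : ∀ n ∈ Icc 1 m, (1/(n:ℝ)) * V n ^ k ≤ L ^ (k-1) * (|lam (n+1)| * b' n) := by
      intro n _
      have hVk : V n ^ k = |lam (n+1)| ^ k * |t' n| ^ k := by
        simp only [hVdef]
        exact Real.mul_rpow (abs_nonneg _) (abs_nonneg _)
      calc (1/(n:ℝ)) * V n ^ k = |lam (n+1)| ^ k * b' n := by
            rw [hVk]; simp only [hb'def]; ring
        _ ≤ (L ^ (k-1) * |lam (n+1)|) * b' n :=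
            mul_le_mul_of_nonneg_right (hpow (n+1)) (hb'0 n)
        _ = L ^ (k-1) * (|lam (n+1)| * b' n) := by ring
    have step2 : ∑ n ∈ Icc 1 m, |lam (n+1)| * b' n ≤ C₁ * K * M₁ + C₁ * K * C₀ := by
      have habel := aux_abel (fun n => |lam (n+1)|) b' m
      have hB : ∀ n : ℕ, 0 ≤ ∑ j ∈ Icc 1 n, b' j := fun n =>
        Finset.sum_nonneg fun j _ => hb'0 j
      have h1 : ∑ n ∈ Icc 1 m, (|lam (n+1)| - |lam (n+1+1)|) * ∑ j ∈ Icc 1 n, b' j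
          ≤ ∑ n ∈ Icc 1 m, C₁ * K * (|A (n+1)| * X (n+1)) := by
        apply Finset.sum_le_sum
        intro n _
        have hd : |lam (n+1)| - |lam (n+1+1)| ≤ |A (n+1)| :=
          (le_abs_self _).trans ((abs_abs_sub_abs_le_abs_sub _ _).trans (hΔ (n+1)))
        have hBn : ∑ j ∈ Icc 1 n, b' j ≤ C₁ * (K * X (n+1)) := by
          have hc := hXcomp n (n+1) (by omega)
          calc ∑ j ∈ Icc 1 n, b' j ≤ C₁ * X n := hC₁X n
            _ ≤ C₁ * (K * X (n+1)) := by nlinarith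
        calc (|lam (n+1)| - |lam (n+1+1)|) * ∑ j ∈ Icc 1 n, b' j
            ≤ |A (n+1)| * ∑ j ∈ Icc 1 n, b' j := mul_le_mul_of_nonneg_right hd (hB n)
          _ ≤ |A (n+1)| * (C₁ * (K * X (n+1))) := mul_le_mul_of_nonneg_left hBn (abs_nonneg _)
          _ = C₁ * K * (|A (n+1)| * X (n+1)) := by ring
      have h2 : ∑ n ∈ Icc 1 m, |A (n+1)| * X (n+1) ≤ M₁ := by
        have ha : ∀ n ∈ Icc 1 m, |A (n+1)| * X (n+1) ≤ P (n+1) := by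
          intro n _
          have hone : (1:ℝ) ≤ ((n+1:ℕ):ℝ) := by
            push_cast
            have : (0:ℝ) ≤ (n:ℝ) := Nat.cast_nonneg n
            linarith
          have hnn : (0:ℝ) ≤ |A (n+1)| * X (n+1) :=
            mul_nonneg (abs_nonneg _) (hXpos (n+1)).le
          calc |A (n+1)| * X (n+1) = 1 * (|A (n+1)| * X (n+1)) := by ring
            _ ≤ ((n+1:ℕ):ℝ) * (|A (n+1)| * X (n+1)) := mul_le_mul_of_nonneg_right hone hnn
            _ = P (n+1) := by simp only [hPdef]; ring
        have he : ∑ n ∈ Icc 1 m, P (n+1) = ∑ w ∈ Icc (1+1) (m+1), P w := by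
          rw [← Finset.map_add_right_Icc (1:ℕ) m 1, Finset.sum_map]
          simp [addRightEmbedding_apply]
        calc ∑ n ∈ Icc 1 m, |A (n+1)| * X (n+1) ≤ ∑ n ∈ Icc 1 m, P (n+1) :=
              Finset.sum_le_sum ha
          _ = ∑ w ∈ Icc (1+1) (m+1), P w := he
          _ ≤ M₁ := hM₁ _
      have h3 : |lam (m+1+1)| * ∑ j ∈ Icc 1 m, b' j ≤ C₁ * K * C₀ := by
        have hBm : ∑ j ∈ Icc 1 m, b' j ≤ C₁ * (K * X (m+1+1)) := by
          have hc := hXcomp m (m+1+1) (by omega)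
          calc ∑ j ∈ Icc 1 m, b' j ≤ C₁ * X m := hC₁X m
            _ ≤ C₁ * (K * X (m+1+1)) := by nlinarith
        calc |lam (m+1+1)| * ∑ j ∈ Icc 1 m, b' j
            ≤ |lam (m+1+1)| * (C₁ * (K * X (m+1+1))) :=
              mul_le_mul_of_nonneg_left hBm (abs_nonneg _)
          _ = C₁ * K * (|lam (m+1+1)| * X (m+1+1)) := by ring
          _ ≤ C₁ * K * C₀ := by
              have := hC₀ (m+1+1)
              nlinarith [mul_nonneg hC₁0 hK0.le]
      have h4 : ∑ n ∈ Icc 1 m, C₁ * K * (|A (n+1)| * X (n+1))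
          = C₁ * K * ∑ n ∈ Icc 1 m, |A (n+1)| * X (n+1) := by
        rw [Finset.mul_sum]
      have h5 : C₁ * K * ∑ n ∈ Icc 1 m, |A (n+1)| * X (n+1) ≤ C₁ * K * M₁ := by
        have := mul_nonneg hC₁0 hK0.le
        nlinarith
      rw [habel]
      rw [h4] at h1
      linarith
    calc ∑ n ∈ Icc 1 m, (1/(n:ℝ)) * V n ^ k
        ≤ ∑ n ∈ Icc 1 m, L ^ (k-1) * (|lam (n+1)| * b' n) := Finset.sum_le_sum step1
      _ = L ^ (k-1) * ∑ n ∈ Icc 1 m, |lam (n+1)| * b' n := by rw [Finset.mul_sum]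
      _ ≤ L ^ (k-1) * (C₁ * K * M₁ + C₁ * K * C₀) :=
          mul_le_mul_of_nonneg_left step2 (Real.rpow_nonneg hL0 _)
  have hM2nn : (0:ℝ) ≤ M₂ := by simpa using hM₂ 0
  have hUsum : ∀ m : ℕ, ∑ n ∈ Icc 1 m, (1/(n:ℝ)) * U n ^ k
      ≤ (2*M₂) ^ (k-1) * (4 * (C₁ * M₁)) := by
    intro m
    set h : ℕ → ℝ := fun v : ℕ => (|A v| * ((v:ℝ)+1)) * |t' v| ^ k with hhdef
    have hh0 : ∀ v, 0 ≤ h v := fun v =>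
      mul_nonneg (mul_nonneg (abs_nonneg _) (by positivity)) (Real.rpow_nonneg (abs_nonneg _) k)
    have step1 : ∀ n ∈ Icc 1 m, (1/(n:ℝ)) * U n ^ k ≤
        (2*M₂) ^ (k-1) * (((n:ℝ)⁻¹ * (n:ℝ)⁻¹) * ∑ v ∈ Icc 1 n, h v) := by
      intro n hn
      simp only [Finset.mem_Icc] at hn
      have hn1 : 1 ≤ n := hn.1
      have hnpos : (0:ℝ) < n := by exact_mod_cast hn1
      have hn1pos : (0:ℝ) < (n:ℝ) + 1 := by positivity
      have hUk : U n ^ k = (((n:ℝ)+1)⁻¹) ^ k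
          * (∑ v ∈ Icc 1 n, (|A v| * ((v:ℝ)+1)) * |t' v|) ^ k := by
        simp only [hUdef]
        exact Real.mul_rpow (by positivity) (hsumnn n)
      have hjen := aux_jensen (Icc 1 n) (fun v => |A v| * ((v:ℝ)+1)) (fun v => |t' v|)
        (fun i _ => mul_nonneg (abs_nonneg _) (by positivity)) (fun i _ => abs_nonneg _) hk
      have hμb : ∑ v ∈ Icc 1 n, |A v| * ((v:ℝ)+1) ≤ 2*M₂ := by
        calc ∑ v ∈ Icc 1 n, |A v| * ((v:ℝ)+1) ≤ ∑ v ∈ Icc 1 n, 2 * ((v:ℝ) * |A v|) := by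
              apply Finset.sum_le_sum
              intro v hv
              simp only [Finset.mem_Icc] at hv
              have hv1 : (1:ℝ) ≤ (v:ℝ) := by exact_mod_cast hv.1
              nlinarith [abs_nonneg (A v)]
          _ = 2 * ∑ v ∈ Icc 1 n, (v:ℝ) * |A v| := by rw [Finset.mul_sum]
          _ ≤ 2 * M₂ := by nlinarith [hM₂ n]
      have hμ0 : 0 ≤ ∑ v ∈ Icc 1 n, |A v| * ((v:ℝ)+1) :=
        Finset.sum_nonneg fun v _ => mul_nonneg (abs_nonneg _) (by positivity)
      have hjk : (∑ v ∈ Icc 1 n, |A v| * ((v:ℝ)+1)) ^ (k-1) ≤ (2*M₂) ^ (k-1) :=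
        Real.rpow_le_rpow hμ0 hμb hk1
      have hinv : (((n:ℝ)+1)⁻¹) ^ k ≤ (n:ℝ)⁻¹ := by
        rw [Real.inv_rpow hn1pos.le]
        have hx : (n:ℝ) ≤ ((n:ℝ)+1) ^ k := by
          have h5 : ((n:ℝ)+1) ^ (1:ℝ) ≤ ((n:ℝ)+1) ^ k :=
            Real.rpow_le_rpow_of_exponent_le (by linarith) hk
          rw [Real.rpow_one] at h5
          linarith
        exact inv_anti₀ hnpos hx
      have hS2 : (∑ v ∈ Icc 1 n, (|A v| * ((v:ℝ)+1)) * |t' v|) ^ k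
          ≤ (2*M₂)^(k-1) * ∑ v ∈ Icc 1 n, h v := by
        refine hjen.trans ?_
        have hx2 : 0 ≤ ∑ v ∈ Icc 1 n, h v := Finset.sum_nonneg fun v _ => hh0 v
        exact mul_le_mul_of_nonneg_right hjk hx2
      calc (1/(n:ℝ)) * U n ^ k
          = (1/(n:ℝ)) * ((((n:ℝ)+1)⁻¹) ^ k
            * (∑ v ∈ Icc 1 n, (|A v| * ((v:ℝ)+1)) * |t' v|) ^ k) := by rw [hUk]
        _ ≤ (1/(n:ℝ)) * ((n:ℝ)⁻¹ * ((2*M₂)^(k-1) * ∑ v ∈ Icc 1 n, h v)) := by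
            refine mul_le_mul_of_nonneg_left ?_ (by positivity)
            exact mul_le_mul hinv hS2 (Real.rpow_nonneg (hsumnn n) k) (by positivity)
        _ = (2*M₂)^(k-1) * (((n:ℝ)⁻¹ * (n:ℝ)⁻¹) * ∑ v ∈ Icc 1 n, h v) := by
            rw [one_div]; ring
    calc ∑ n ∈ Icc 1 m, (1/(n:ℝ)) * U n ^ k
        ≤ ∑ n ∈ Icc 1 m, (2*M₂)^(k-1) * (((n:ℝ)⁻¹ * (n:ℝ)⁻¹) * ∑ v ∈ Icc 1 n, h v) :=
          Finset.sum_le_sum step1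
      _ = (2*M₂)^(k-1) * ∑ n ∈ Icc 1 m, ∑ v ∈ Icc 1 n, ((n:ℝ)⁻¹ * (n:ℝ)⁻¹) * h v := by
          rw [Finset.mul_sum]
          exact Finset.sum_congr rfl fun n hn => by rw [Finset.mul_sum]
      _ = (2*M₂)^(k-1) * ∑ v ∈ Icc 1 m, ∑ n ∈ Icc v m, ((n:ℝ)⁻¹ * (n:ℝ)⁻¹) * h v := by
          rw [aux_swap (fun v n => ((n:ℝ)⁻¹ * (n:ℝ)⁻¹) * h v) m]
      _ ≤ (2*M₂)^(k-1) * ∑ v ∈ Icc 1 m, 4 * (C₁ * P v) := by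
          refine mul_le_mul_of_nonneg_left ?_ (Real.rpow_nonneg (by linarith) _)
          apply Finset.sum_le_sum
          intro v hv
          simp only [Finset.mem_Icc] at hv
          have hv1 : 1 ≤ v := hv.1
          have hvpos : (0:ℝ) < v := by exact_mod_cast hv1
          have e1 : ∑ n ∈ Icc v m, ((n:ℝ)⁻¹ * (n:ℝ)⁻¹) * h v
              = (∑ n ∈ Icc v m, (n:ℝ)⁻¹ * (n:ℝ)⁻¹) * h v := by rw [Finset.sum_mul]
          rw [e1]
          have hinv2 := aux_invsq v hv1 m
          have hvr : (1:ℝ) ≤ (v:ℝ) := by exact_mod_cast hv1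
          have hμb2 : |A v| * ((v:ℝ)+1) ≤ 2*(v:ℝ)*|A v| := by nlinarith [abs_nonneg (A v)]
          have hhb : h v ≤ (2*(v:ℝ)*|A v|) * (C₁ * (v:ℝ) * X v) := by
            simp only [hhdef]
            exact mul_le_mul hμb2 (hterm v hv1) (Real.rpow_nonneg (abs_nonneg _) k)
              (by positivity)
          have hprod : (∑ n ∈ Icc v m, (n:ℝ)⁻¹ * (n:ℝ)⁻¹) * h v
              ≤ (2/(v:ℝ)) * ((2*(v:ℝ)*|A v|) * (C₁ * (v:ℝ) * X v)) :=
            mul_le_mul hinv2 hhb (hh0 v) (by positivity)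
          have heq : (2/(v:ℝ)) * ((2*(v:ℝ)*|A v|) * (C₁ * (v:ℝ) * X v)) = 4 * (C₁ * P v) := by
            simp only [hPdef]
            field_simp
            ring
          linarith
      _ ≤ (2*M₂)^(k-1) * (4 * (C₁ * M₁)) := by
          have h1 : ∑ v ∈ Icc 1 m, 4 * (C₁ * P v) = (4*C₁) * ∑ v ∈ Icc 1 m, P v := by
            rw [Finset.mul_sum]
            exact Finset.sum_congr rfl fun v _ => by ring
          have h2 := hM₁ (Icc 1 m)
          have h4 : (4*C₁) * ∑ v ∈ Icc 1 m, P v ≤ 4 * (C₁ * M₁) := by nlinarith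
          rw [h1]
          exact mul_le_mul_of_nonneg_left h4 (Real.rpow_nonneg (by linarith) _)
  have key : ∀ m : ℕ, ∑ n ∈ Icc 1 m, (1/(n:ℝ)) * |((n:ℝ)+1)⁻¹ * T n| ^ k
      ≤ 2^k * ((2*M₂)^(k-1) * (4*(C₁*M₁))) + 2^k * (L^(k-1) * (C₁*K*M₁ + C₁*K*C₀)) := by
    intro m
    have h1 : ∑ n ∈ Icc 1 m, (1/(n:ℝ)) * |((n:ℝ)+1)⁻¹ * T n| ^ k
        ≤ ∑ n ∈ Icc 1 m, (2^k * ((1/(n:ℝ)) * U n ^ k) + 2^k * ((1/(n:ℝ)) * V n ^ k)) :=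
      Finset.sum_le_sum fun n _ => hpt n
    have h2 : ∑ n ∈ Icc 1 m, (2^k * ((1/(n:ℝ)) * U n ^ k) + 2^k * ((1/(n:ℝ)) * V n ^ k))
        = 2^k * (∑ n ∈ Icc 1 m, (1/(n:ℝ)) * U n ^ k)
          + 2^k * (∑ n ∈ Icc 1 m, (1/(n:ℝ)) * V n ^ k) := by
      rw [Finset.sum_add_distrib, Finset.mul_sum, Finset.mul_sum]
    have h2k : (0:ℝ) ≤ 2^k := Real.rpow_nonneg (by norm_num) k
    have h3 := hUsum m
    have h4 := hVsum m
    rw [h2] at h1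
    nlinarith [mul_le_mul_of_nonneg_left h3 h2k, mul_le_mul_of_nonneg_left h4 h2k]
  have hF0 : ∀ n : ℕ, 0 ≤ (1/(n:ℝ)) * |((n:ℝ)+1)⁻¹ * T n| ^ k := by
    intro n
    have h1 : (0:ℝ) ≤ |((n:ℝ)+1)⁻¹ * T n| ^ k := Real.rpow_nonneg (abs_nonneg _) k
    have h2 : (0:ℝ) ≤ 1/(n:ℝ) := by positivity
    exact mul_nonneg h2 h1
  have hrange : ∀ n : ℕ, ∑ i ∈ range n, (1/(i:ℝ)) * |((i:ℝ)+1)⁻¹ * T i| ^ k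
      ≤ 2^k * ((2*M₂)^(k-1) * (4*(C₁*M₁))) + 2^k * (L^(k-1) * (C₁*K*M₁ + C₁*K*C₀)) := by
    intro n
    have hsub : range n ⊆ Icc 0 n := fun x hx => by
      simp only [Finset.mem_range] at hx
      simp only [Finset.mem_Icc]
      omega
    have hicc : Icc (0:ℕ) n = insert 0 (Icc 1 n) := by
      ext x
      simp only [Finset.mem_Icc, Finset.mem_insert]
      omega
    calc ∑ i ∈ range n, (1/(i:ℝ)) * |((i:ℝ)+1)⁻¹ * T i| ^ k
        ≤ ∑ i ∈ Icc 0 n, (1/(i:ℝ)) * |((i:ℝ)+1)⁻¹ * T i| ^ k :=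
          Finset.sum_le_sum_of_subset_of_nonneg hsub fun i _ _ => hF0 i
      _ = (1/((0:ℕ):ℝ)) * |(((0:ℕ):ℝ)+1)⁻¹ * T 0| ^ k
          + ∑ i ∈ Icc 1 n, (1/(i:ℝ)) * |((i:ℝ)+1)⁻¹ * T i| ^ k := by
          rw [hicc, Finset.sum_insert (by simp)]
      _ = ∑ i ∈ Icc 1 n, (1/(i:ℝ)) * |((i:ℝ)+1)⁻¹ * T i| ^ k := by
          norm_num
      _ ≤ _ := key n
  simp only [hTdef] at hF0 hrange
  exact summable_of_sum_range_le hF0 hrange
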